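/- arXiv:1010.1473 — 2 statements merged into one kernel-verified Lean document; each statement's English description precedes it below -/
import Mathlib

section
/- Let d ≥ 2 and let u, v be monomials of degree d with u ≥_lex v, x_1 | u, ν_1(u) = 1, and suppose x_n·u ≥_lex x_1·v (equivalently v ≤_lex x_2^{d-1}x_n). Let I = (L(u,v)). Then for every k ≥ 2 the monomial m = u·(x_2^{d-1}x_n)^{k-1}/x_1 satisfies m ∉ I^k and x_i·m ∈ I^k for all i; hence depth(S/I^k) = 0. -/
open MvPolynomial

noncomputable section

namespace LexPaper

/-- total degree of an exponent vector -/
def deg {sigma : Type*} (a : sigma  →₀  ℕ) : ℕ := a.sum fun _ e => e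

/-- the monomial x^a as an element of the polynomial ring -/
def mon (k : Type*) [Field k] {sigma : Type*} (a : sigma  →₀  ℕ) : MvPolynomial sigma k :=
  MvPolynomial.monomial a 1

/-- `lexLe a b` : a ≤_lex b, where x_1 > x_2 > ... > x_n (index 0 is the largest variable). -/
def lexLe {n : ℕ} (a b : Fin n  →₀  ℕ) : Prop := toLex a ≤ toLex b

/-- `lexLt a b` : a <_lex b. -/
def lexLt {n : ℕ} (a b : Fin n  →₀  ℕ) : Prop := toLex a < toLex b

/-- the lexsegment set L(u,v) : all exponent vectors of degree d between v and u in lex order -/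
def lexSeg {n : ℕ} (d : ℕ) (u v : Fin n  →₀  ℕ) : Set (Fin n  →₀  ℕ) :=
  {m | deg m = d  ∧  lexLe v m  ∧  lexLe m u}

/-- the lexsegment ideal (L(u,v)) -/
def lexIdeal (k : Type*) [Field k] {n : ℕ} (d : ℕ) (u v : Fin n  →₀  ℕ) :
    Ideal (MvPolynomial (Fin n) k) :=
  Ideal.span (mon k '' lexSeg d u v)

/-- the maximal graded ideal (x_1, ..., x_n) -/
def mMax (k : Type*) [Field k] (n : ℕ) : Ideal (MvPolynomial (Fin n) k) :=
  Ideal.span (Set.range (X : Fin n -> MvPolynomial (Fin n) k))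

/-- depth of S/I: the supremum of lengths of regular sequences on S/I consisting of
elements of the maximal graded ideal -/
def quotDepth (k : Type*) [Field k] {n : ℕ} (I : Ideal (MvPolynomial (Fin n) k)) : ℕ :=
  sSup {r : ℕ | ∃ rs : List (MvPolynomial (Fin n) k), rs.length = r  ∧ 
    (∀ x ∈ rs, x ∈ mMax k n)  ∧  RingTheory.Sequence.IsRegular (MvPolynomial (Fin n) k ⧸ I) rs}


/- ## auxiliary lemmas -/

lemma deg_add {s : Type*} (a b : s →₀ ℕ) : deg (a+b) = deg a + deg b :=
  Finsupp.sum_add_index' (fun _ => rfl) (fun _ _ _ => rfl)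

lemma deg_single {s : Type*} (i : s) (c : ℕ) : deg (Finsupp.single i c) = c :=
  Finsupp.sum_single_index rfl

lemma val_le_deg {s : Type*} (a : s →₀ ℕ) (j : s) : a j ≤ deg a := by
  by_cases h : a j = 0
  · omega
  · exact Finset.single_le_sum (fun _ _ => Nat.zero_le _) (Finsupp.mem_support_iff.mpr h)

lemma pair_le_deg {s : Type*} (a : s →₀ ℕ) (j j' : s) (h : j ≠ j') : a j + a j' ≤ deg a := by
  classical
  by_cases h1 : a j = 0
  · simpa [h1] using val_le_deg a j'
  by_cases h2 : a j' = 0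
  · simpa [h2] using val_le_deg a j
  · have hsub : ({j, j'} : Finset s) ⊆ a.support := by
      intro x hx
      rw [Finset.mem_insert, Finset.mem_singleton] at hx
      rcases hx with rfl | rfl <;> simpa [Finsupp.mem_support_iff]
    calc a j + a j' = ∑ x ∈ ({j, j'} : Finset s), a x := (Finset.sum_pair h).symm
      _ ≤ ∑ x ∈ a.support, a x := Finset.sum_le_sum_of_subset hsub
      _ = deg a := rfl

lemma lexLt_of_lt_at {n : ℕ} {a b : Fin n →₀ ℕ} (i : Fin n)
    (h1 : ∀ j < i, a j = b j) (h2 : a i < b i) : lexLt a b :=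
  Finsupp.Lex.lt_iff.mpr ⟨i, h1, h2⟩

lemma lexLe_add_right {n : ℕ} {a b : Fin n →₀ ℕ} (h : lexLe a b) (c : Fin n →₀ ℕ) :
    lexLe (a + c) (b + c) := by
  have := add_le_add_left (α := Lex (Fin n →₀ ℕ)) h (toLex c)
  exact this

lemma lexLe_add_left {n : ℕ} {a b : Fin n →₀ ℕ} (h : lexLe a b) (c : Fin n →₀ ℕ) :
    lexLe (c + a) (c + b) := by
  have := add_le_add_right (α := Lex (Fin n →₀ ℕ)) h (toLex c)
  exact this

lemma lexLe_cancel_right {n : ℕ} {a b c : Fin n →₀ ℕ} (h : lexLe (a + c) (b + c)) :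
    lexLe a b := by
  by_contra hc
  have h2 : toLex b < toLex a := lt_of_not_ge hc
  have h3 := add_lt_add_left (α := Lex (Fin n →₀ ℕ)) h2 (toLex c)
  exact absurd h (not_le_of_gt h3)

lemma mon_mul {k : Type*} [Field k] {s : Type*} (a b : s →₀ ℕ) :
    mon k a * mon k b = mon k (a + b) := by
  simp [mon, monomial_mul]

lemma mon_pow {k : Type*} [Field k] {s : Type*} (a : s →₀ ℕ) (c : ℕ) :
    (mon k a) ^ c = mon k (c • a) := by
  induction c with
  | zero => simp [mon]
  | succ c ih => rw [pow_succ, ih, mon_mul, succ_nsmul]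

lemma coeff_mul_low {k : Type*} [Field k] {s : Type*} {f g : MvPolynomial s k} {N M : ℕ}
    (hf : ∀ a, deg a < N → coeff a f = 0) (hg : ∀ a, deg a < M → coeff a g = 0) :
    ∀ a, deg a < N + M → coeff a (f * g) = 0 := by
  classical
  intro a ha
  rw [coeff_mul]
  apply Finset.sum_eq_zero
  intro x hx
  rw [Finset.HasAntidiagonal.mem_antidiagonal] at hx
  have hd : deg x.1 + deg x.2 = deg a := by rw [← deg_add, hx]
  rcases lt_or_ge (deg x.1) N with h | h
  · rw [hf x.1 h, zero_mul]
  · rw [hg x.2 (by omega), mul_zero]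

lemma mem_low {k : Type*} [Field k] {s : Type*} {S : Set (s →₀ ℕ)} {N : ℕ}
    (hS : ∀ b ∈ S, N ≤ deg b) {f : MvPolynomial s k}
    (hf : f ∈ Ideal.span (mon k '' S)) : ∀ a, deg a < N → coeff a f = 0 := by
  classical
  refine Submodule.span_induction ?_ (by simp) ?_ ?_ hf
  · rintro x ⟨b, hb, rfl⟩ a ha
    have : a ≠ b := fun h => by subst h; exact absurd (hS _ hb) (by omega)
    simp [mon, coeff_monomial, this.symm]
  · intro x y _ _ hx hy a ha
    simp [hx a ha, hy a ha]
  · intro c x _ hx a ha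
    rw [smul_eq_mul, coeff_mul]
    apply Finset.sum_eq_zero
    intro p hp
    rw [Finset.HasAntidiagonal.mem_antidiagonal] at hp
    have hd : deg p.1 + deg p.2 = deg a := by rw [← deg_add, hp]
    rw [hx p.2 (by omega), mul_zero]

lemma pow_mem_low {k : Type*} [Field k] {s : Type*} {S : Set (s →₀ ℕ)} {N : ℕ}
    (hS : ∀ b ∈ S, N ≤ deg b) (t : ℕ) {f : MvPolynomial s k}
    (hf : f ∈ (Ideal.span (mon k '' S)) ^ t) : ∀ a, deg a < t * N → coeff a f = 0 := by
  induction t generalizing f with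
  | zero => intro a ha; omega
  | succ t ih =>
    rw [pow_succ] at hf
    have key : ∀ a, deg a < t * N + N → coeff a f = 0 := by
      refine Submodule.mul_induction_on hf ?_ ?_
      · intro x hx y hy
        exact coeff_mul_low (ih hx) (mem_low hS hy)
      · intro x y hx hy a ha
        simp [hx a ha, hy a ha]
    intro a ha
    exact key a (by rw [Nat.succ_mul] at ha; omega)

/- ## the main auxiliary lemma -/

lemma main_aux {k : Type*} [Field k] {n d : ℕ} (hn : 2 ≤ n) (hd : 2 ≤ d)
    (i0 i1 iN : Fin n) (h0 : (i0 : ℕ) = 0) (h1 : (i1 : ℕ) = 1) (hN : (iN : ℕ) = n - 1)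
    (u v : Fin n →₀ ℕ) (hu : deg u = d) (hv : deg v = d) (huv : lexLe v u)
    (hnu1 : u i0 = 1) (hx1v : v i0 = 0)
    (hlex : lexLe (v + Finsupp.single i0 1) (u + Finsupp.single iN 1))
    (t : ℕ) (ht : 2 ≤ t) :
    mon k (u + (t-1) • (Finsupp.single i1 (d-1) + Finsupp.single iN 1) - Finsupp.single i0 1)
        ∉ (lexIdeal k d u v) ^ t ∧
    (∀ i : Fin n, X i * mon k (u + (t-1) • (Finsupp.single i1 (d-1) + Finsupp.single iN 1) - Finsupp.single i0 1)
        ∈ (lexIdeal k d u v) ^ t) ∧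
    quotDepth k ((lexIdeal k d u v) ^ t) = 0 := by
  classical
  have h01 : i0 ≠ i1 := fun h => by rw [h] at h0; omega
  have h0N : i0 ≠ iN := fun h => by rw [h] at h0; omega
  set w : Fin n →₀ ℕ := Finsupp.single i1 (d-1) + Finsupp.single iN 1 with hw
  set u'' : Fin n →₀ ℕ := u - Finsupp.single i0 1 with hu''def
  have hw0 : w i0 = 0 := by
    simp [hw, Finsupp.single_apply, h01.symm, h0N.symm]
  have huu'' : u'' + Finsupp.single i0 1 = u := by
    ext j
    rw [Finsupp.add_apply, hu''def, Finsupp.tsub_apply]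
    by_cases hj : j = i0
    · subst hj
      rw [Finsupp.single_apply, if_pos rfl, hnu1]
    · rw [Finsupp.single_apply, if_neg (Ne.symm hj)]
      omega
  have hu''0 : u'' i0 = 0 := by
    rw [hu''def, Finsupp.tsub_apply, Finsupp.single_apply, if_pos rfl, hnu1]
  set m : Fin n →₀ ℕ := u + (t-1) • w - Finsupp.single i0 1 with hmdef
  have hm : m = u'' + (t-1) • w := by
    ext j
    by_cases hj : j = i0
    · subst hj
      simp [hmdef, hu''def, Finsupp.single_apply, hnu1, hw0]
    · simp [hmdef, hu''def, Finsupp.single_apply, Ne.symm hj]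
  -- degrees
  have hdegu'' : deg u'' = d - 1 := by
    have := deg_add u'' (Finsupp.single i0 1)
    rw [huu'', hu, deg_single] at this
    omega
  have hdegw : deg w = d := by
    rw [hw, deg_add, deg_single, deg_single]; omega
  have hdegm : deg m + 1 = t * d := by
    rw [hm, deg_add, hdegu'']
    have hsm : deg ((t-1) • w) = (t-1) * deg w := by
      induction (t-1) with
      | zero => simp [deg]
      | succ c ih => rw [succ_nsmul, deg_add, ih]; ring
    rw [hsm, hdegw, Nat.sub_one_mul]
    have h4 : d ≤ t * d := Nat.le_mul_of_pos_left d (by omega)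
    generalize t * d = X at h4 ⊢
    omega
  -- w ∈ L
  have hwu : lexLt w u := by
    refine lexLt_of_lt_at i0 (fun j hj => absurd hj ?_) ?_
    · simp only [not_lt, Fin.le_def, h0]; omega
    · rw [hw0, hnu1]; omega
  have hstep1 : lexLe v (u'' + Finsupp.single iN 1) := by
    apply lexLe_cancel_right (c := Finsupp.single i0 1)
    have : u + Finsupp.single iN 1 = (u'' + Finsupp.single iN 1) + Finsupp.single i0 1 := by
      rw [← huu'', add_right_comm]
    rw [← this]
    exact hlex
  have hus : lexLe u'' (Finsupp.single i1 (d-1)) := by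
    by_contra hc
    have hlt : toLex (Finsupp.single i1 (d-1)) < toLex u'' := lt_of_not_ge hc
    obtain ⟨j, hj1, hj2⟩ := hlt
    simp only [ofLex_toLex] at hj1 hj2
    by_cases hji0 : j = i0
    · subst hji0
      rw [hu''0] at hj2
      simp [Finsupp.single_apply] at hj2
    by_cases hji1 : j = i1
    · subst hji1
      rw [Finsupp.single_apply, if_pos rfl] at hj2
      have := val_le_deg u'' j
      omega
    · have hij : i1 < j := by
        rw [Fin.lt_def, h1]
        have hj0' : (j : ℕ) ≠ 0 := fun h => hji0 (Fin.ext (h.trans h0.symm))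
        have hj1' : (j : ℕ) ≠ 1 := fun h => hji1 (Fin.ext (h.trans h1.symm))
        omega
      have heq := hj1 i1 hij
      rw [Finsupp.single_apply, if_pos rfl] at heq
      have hne : Finsupp.single i1 (d-1) j = 0 := by
        rw [Finsupp.single_apply, if_neg (fun h => hji1 h.symm)]
      rw [hne] at hj2
      have := pair_le_deg u'' i1 j (Fin.ne_of_lt hij)
      omega
  have hvw : lexLe v w := by
    have h2 : lexLe (u'' + Finsupp.single iN 1) w :=
      lexLe_add_right hus (Finsupp.single iN 1)
    exact le_trans hstep1 h2
  have hwL : w ∈ lexSeg d u v := ⟨hdegw, hvw, le_of_lt hwu⟩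
  have hgen : ∀ i : Fin n, (u'' + Finsupp.single i 1) ∈ lexSeg d u v := by
    intro i
    refine ⟨by rw [deg_add, deg_single, hdegu'']; omega, ?_, ?_⟩
    · refine le_trans hstep1 (lexLe_add_left ?_ u'')
      by_cases hi : i = iN
      · subst hi; exact le_refl _
      · have hiN : (i : ℕ) < n - 1 := by
          have := i.isLt
          rcases Nat.lt_or_ge (i : ℕ) (n-1) with h | h
          · exact h
          · exact absurd (Fin.ext (by omega : (i:ℕ) = (iN:ℕ))) hi
        refine le_of_lt (lexLt_of_lt_at i ?_ ?_)
        · intro j hj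
          rw [Fin.lt_def] at hj
          rw [Finsupp.single_apply, Finsupp.single_apply, if_neg, if_neg]
          · exact fun h => by rw [h] at hj; omega
          · exact fun h => by rw [← h, hN] at hj; omega
        · rw [Finsupp.single_apply, Finsupp.single_apply, if_pos rfl,
            if_neg (fun h => by rw [← h, hN] at hiN; omega)]
          omega
    · by_cases hi : i = i0
      · subst hi; rw [huu'']; exact le_refl (toLex u)
      · refine le_of_lt (lexLt_of_lt_at i0 (fun j hj => absurd hj ?_) ?_)
        · simp only [not_lt, Fin.le_def, h0]; omega
        · rw [Finsupp.add_apply, hu''0, Finsupp.single_apply, if_neg hi, hnu1]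
          omega
  -- non-membership
  have hnm : mon k m ∉ (lexIdeal k d u v) ^ t := by
    intro hmem
    have hS : ∀ b ∈ lexSeg d u v, d ≤ deg b := fun b hb => le_of_eq hb.1.symm
    have := pow_mem_low hS t hmem m (by omega)
    rw [mon, coeff_monomial, if_pos rfl] at this
    exact one_ne_zero this
  -- membership of X i * m
  have hmem : ∀ i : Fin n, X i * mon k m ∈ (lexIdeal k d u v) ^ t := by
    intro i
    have hX : (X i : MvPolynomial (Fin n) k) = mon k (Finsupp.single i 1) := rfl
    have hexp : Finsupp.single i 1 + m = (u'' + Finsupp.single i 1) + (t-1) • w := by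
      rw [hm, ← add_assoc, add_comm (Finsupp.single i 1) u'']
    rw [hX, mon_mul, hexp, ← mon_mul, ← mon_pow]
    have hsplit : (lexIdeal k d u v) ^ t = lexIdeal k d u v * (lexIdeal k d u v) ^ (t-1) := by
      rw [← pow_succ']
      congr 1
      omega
    rw [hsplit]
    exact Ideal.mul_mem_mul (Ideal.subset_span (Set.mem_image_of_mem _ (hgen i)))
      (Ideal.pow_mem_pow (Ideal.subset_span (Set.mem_image_of_mem _ hwL)) _)
  refine ⟨hnm, hmem, ?_⟩
  -- depth zero
  set J := (lexIdeal k d u v) ^ t with hJ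
  have hsub : {r : ℕ | ∃ rs : List (MvPolynomial (Fin n) k), rs.length = r ∧
      (∀ x ∈ rs, x ∈ mMax k n) ∧
      RingTheory.Sequence.IsRegular (MvPolynomial (Fin n) k ⧸ J) rs} ⊆ {0} := by
    rintro r ⟨rs, hlen, hmemmax, hreg⟩
    simp only [Set.mem_singleton_iff]
    by_contra hr
    obtain ⟨x, rest, rfl⟩ : ∃ x rest, rs = x :: rest := by
      cases rs with
      | nil => simp at hlen; omega
      | cons a l => exact ⟨a, l, rfl⟩
    have hx : x ∈ mMax k n := hmemmax x (List.mem_cons_self)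
    have hsm : IsSMulRegular (MvPolynomial (Fin n) k ⧸ J) x :=
      ((RingTheory.Sequence.isRegular_cons_iff _ _ _).mp hreg).1
    have hxm : x * mon k m ∈ J := by
      refine Submodule.span_induction ?_ ?_ ?_ ?_ hx
      · rintro y ⟨i, rfl⟩
        exact hmem i
      · simp
      · intro a b _ _ ha hb
        rw [add_mul]; exact J.add_mem ha hb
      · intro c a _ ha
        rw [smul_eq_mul, mul_assoc]
        exact J.mul_mem_left c ha
    have hzero : (Ideal.Quotient.mk J (mon k m)) = 0 := by
      apply hsm
      show x • (Ideal.Quotient.mk J (mon k m)) = x • (0 : MvPolynomial (Fin n) k ⧸ J)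
      rw [smul_zero]
      have : x • (Ideal.Quotient.mk J (mon k m)) = Ideal.Quotient.mk J (x * mon k m) := rfl
      rw [this, Ideal.Quotient.eq_zero_iff_mem]
      exact hxm
    exact hnm (Ideal.Quotient.eq_zero_iff_mem.mp hzero)
  rw [quotDepth]
  rcases Set.subset_singleton_iff_eq.mp hsub with h | h
  · rw [h]
    exact csSup_empty
  · rw [h]
    exact csSup_singleton 0


theorem statement2 {k : Type*} [Field k] {n d : ℕ} (hn : 2 ≤ n) (hd : 2 ≤ d)
    (u v : Fin n →₀ ℕ) (hu : deg u = d) (hv : deg v = d) (huv : lexLe v u)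
    (hnu1 : u (⟨0, by omega⟩ : Fin n) = 1) (hx1v : v (⟨0, by omega⟩ : Fin n) = 0)
    (hlex : lexLe (v + Finsupp.single (⟨0, by omega⟩ : Fin n) 1) (u + Finsupp.single (⟨n-1, by omega⟩ : Fin n) 1))
    (t : ℕ) (ht : 2 ≤ t) :
    mon k (u + (t-1) • (Finsupp.single (⟨1, by omega⟩ : Fin n) (d-1) + Finsupp.single (⟨n-1, by omega⟩ : Fin n) 1) - Finsupp.single (⟨0, by omega⟩ : Fin n) 1)
        ∉ (lexIdeal k d u v) ^ t ∧
    (∀ i : Fin n, X i * mon k (u + (t-1) • (Finsupp.single (⟨1, by omega⟩ : Fin n) (d-1) + Finsupp.single (⟨n-1, by omega⟩ : Fin n) 1) - Finsupp.single (⟨0, by omega⟩ : Fin n) 1)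
        ∈ (lexIdeal k d u v) ^ t) ∧
    quotDepth k ((lexIdeal k d u v) ^ t) = 0 :=
  main_aux hn hd ⟨0, by omega⟩ ⟨1, by omega⟩ ⟨n-1, by omega⟩ rfl rfl rfl u v hu hv huv hnu1
    hx1v hlex t ht

end LexPaper
end
end

section
/- Let S = k[x_1,...,x_t, y_1,...,y_s] and let I = J·S + K·S where J is a monomial ideal of S_1 = k[x_1,...,x_t] and K is a monomial ideal of S_2 = k[y_1,...,y_s]. Then a prime p is an associated prime of S/I if and only if p = p_1·S + p_2·S for some p_1 ∈ Ass_{S_1}(S_1/J) and p_2 ∈ Ass_{S_2}(S_2/K). -/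
open MvPolynomial

noncomputable section

namespace LexPaper

section Staircase

variable {k : Type*} [Field k] {σ : Type*}

/-- staircase (upward closure) of a set of exponent vectors -/
def stair (G : Set (σ →₀ ℕ)) : Set (σ →₀ ℕ) := {b | ∃ g ∈ G, g ≤ b}

lemma subset_stair (G : Set (σ →₀ ℕ)) : G ⊆ stair G := fun g hg => ⟨g, hg, le_rfl⟩

lemma stair_up {G : Set (σ →₀ ℕ)} {b c : σ →₀ ℕ} (h : b ∈ stair G) (hbc : b ≤ c) :
    c ∈ stair G := by
  obtain ⟨g, hg, hgb⟩ := h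
  exact ⟨g, hg, hgb.trans hbc⟩

lemma stair_add_left {G : Set (σ →₀ ℕ)} {v : σ →₀ ℕ} (h : v ∈ stair G) (u : σ →₀ ℕ) :
    u + v ∈ stair G := stair_up h (le_add_self)

lemma stair_stair (G : Set (σ →₀ ℕ)) : stair (stair G) = stair G := by
  ext b
  constructor
  · rintro ⟨g, hg, hgb⟩; exact stair_up hg hgb
  · intro h; exact subset_stair _ h

lemma stair_setOf_add (G : Set (σ →₀ ℕ)) (a : σ →₀ ℕ) :
    stair {c | c + a ∈ stair G} = {c | c + a ∈ stair G} := by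
  ext b
  constructor
  · rintro ⟨g, hg, hgb⟩
    exact stair_up hg (add_le_add_left hgb a)
  · intro h; exact subset_stair _ h

/-- the ideal of polynomials supported on the staircase of `G` -/
def stairIdeal (k : Type*) [Field k] {σ : Type*} (G : Set (σ →₀ ℕ)) :
    Ideal (MvPolynomial σ k) where
  carrier := {f | ∀ b ∈ f.support, b ∈ stair G}
  add_mem' := by
    classical
    intro f g hf hg b hb
    rcases Finset.mem_union.1 (MvPolynomial.support_add hb) with h | h
    exacts [hf b h, hg b h]
  zero_mem' := by simp
  smul_mem' := by
    classical
    intro c f hf b hb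
    rw [smul_eq_mul] at hb
    rcases Finset.mem_add.1 (MvPolynomial.support_mul c f hb) with ⟨u, hu, v, hv, rfl⟩
    exact stair_add_left (hf v hv) u

lemma mem_stairIdeal {G : Set (σ →₀ ℕ)} {f : MvPolynomial σ k} :
    f ∈ stairIdeal k G ↔ ∀ b ∈ f.support, b ∈ stair G := ⟨fun h => h, fun h => h⟩

lemma stairIdeal_congr {G G' : Set (σ →₀ ℕ)} (h : stair G = stair G') :
    stairIdeal k G = stairIdeal k G' := by
  ext f; rw [mem_stairIdeal, mem_stairIdeal, h]

lemma support_mon (a : σ →₀ ℕ) : (mon k a).support = {a} := by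
  classical
  simp [mon, MvPolynomial.support_monomial]

lemma mon_ne_zero (a : σ →₀ ℕ) : (mon k a : MvPolynomial σ k) ≠ 0 := by
  simp [mon, MvPolynomial.monomial_eq_zero]

lemma span_mon_eq (G : Set (σ →₀ ℕ)) :
    Ideal.span (mon k '' G) = stairIdeal k G := by
  apply le_antisymm
  · rw [Ideal.span_le]
    rintro x ⟨g, hg, rfl⟩
    rw [SetLike.mem_coe, mem_stairIdeal]
    intro b hb
    rw [support_mon, Finset.mem_singleton] at hb
    subst hb
    exact subset_stair _ hg
  · intro f hf
    rw [mem_stairIdeal] at hf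
    rw [← MvPolynomial.support_sum_monomial_coeff f]
    refine Ideal.sum_mem _ fun b hb => ?_
    obtain ⟨g, hg, hgb⟩ := hf b hb
    obtain ⟨d, rfl⟩ := le_iff_exists_add.1 hgb
    have : (monomial (g + d) (coeff (g + d) f) : MvPolynomial σ k)
        = monomial d (coeff (g + d) f) * mon k g := by
      rw [mon, MvPolynomial.monomial_mul, mul_one, add_comm]
    rw [this]
    exact Ideal.mul_mem_left _ _ (Ideal.subset_span ⟨g, hg, rfl⟩)

lemma mon_mem_stairIdeal {G : Set (σ →₀ ℕ)} {a : σ →₀ ℕ} :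
    mon k a ∈ stairIdeal k G ↔ a ∈ stair G := by
  rw [mem_stairIdeal, support_mon]
  simp


lemma support_mul_mon {f : MvPolynomial σ k} {a : σ →₀ ℕ} :
    (f * mon k a).support = f.support.map (addRightEmbedding a) := by
  classical
  apply Finset.Subset.antisymm
  · intro b hb
    rcases Finset.mem_add.1 (MvPolynomial.support_mul f (mon k a) hb) with ⟨u, hu, v, hv, rfl⟩
    rw [support_mon, Finset.mem_singleton] at hv
    subst hv
    exact Finset.mem_map.2 ⟨u, hu, rfl⟩
  · intro b hb
    rcases Finset.mem_map.1 hb with ⟨c, hc, rfl⟩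
    rw [MvPolynomial.mem_support_iff]
    have : coeff (c + a) (f * mon k a) = coeff c f * 1 := by
      rw [mon]; exact MvPolynomial.coeff_mul_monomial _ _ _ _
    rw [addRightEmbedding_apply, this, mul_one]
    exact MvPolynomial.mem_support_iff.1 hc

lemma mul_mon_mem_iff {G : Set (σ →₀ ℕ)} {f : MvPolynomial σ k} {a : σ →₀ ℕ} :
    f * mon k a ∈ stairIdeal k G ↔ ∀ c ∈ f.support, c + a ∈ stair G := by
  rw [mem_stairIdeal]
  constructor
  · intro h c hc
    exact h _ (by rw [support_mul_mon]; exact Finset.mem_map.2 ⟨c, hc, rfl⟩)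
  · intro h b hb
    rw [support_mul_mon] at hb
    rcases Finset.mem_map.1 hb with ⟨c, hc, rfl⟩
    exact h c hc

lemma colon_stairIdeal (G : Set (σ →₀ ℕ)) (a : σ →₀ ℕ) :
    (stairIdeal k G).colon (Ideal.span {mon k a}) = stairIdeal k {c | c + a ∈ stair G} := by
  ext f
  rw [Ideal.mem_colon_span_singleton, mul_mon_mem_iff, mem_stairIdeal, stair_setOf_add]
  rfl

lemma annihilator_mk_span {R : Type*} [CommRing R] (I : Ideal R) (f : R) :
    (Submodule.span R {(Ideal.Quotient.mk I f : R ⧸ I)}).annihilator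
      = I.colon (Ideal.span {f}) := by
  ext g
  rw [Submodule.mem_annihilator_span_singleton, Ideal.mem_colon_span_singleton]
  rw [Algebra.smul_def, Ideal.Quotient.algebraMap_eq, ← map_mul,
    Ideal.Quotient.eq_zero_iff_mem]

lemma mem_associatedPrimes_quotient_iff {R : Type*} [CommRing R] [IsNoetherianRing R] {I p : Ideal R} :
    p ∈ associatedPrimes R (R ⧸ I) ↔ p.IsPrime ∧ ∃ f : R, p = I.colon (Ideal.span {f}) := by
  rw [AssociatedPrimes.mem_iff, isAssociatedPrime_iff]
  simp only [Submodule.bot_colon']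
  refine and_congr_right fun _ => ?_
  constructor
  · rintro ⟨x, hx⟩
    obtain ⟨f, rfl⟩ := Ideal.Quotient.mk_surjective x
    exact ⟨f, hx.trans (annihilator_mk_span I f)⟩
  · rintro ⟨f, hf⟩
    exact ⟨Ideal.Quotient.mk I f, hf.trans (annihilator_mk_span I f).symm⟩

end Staircase


section LexArg

variable {k : Type*} [Field k] {σ : Type*} [LinearOrder σ]

/-- the lex-largest exponent in the support of `f` -/
def topExp (f : MvPolynomial σ k) : σ →₀ ℕ :=
  letI : Decidable (f = 0) := Classical.dec _
  if h : f = 0 then 0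
  else ofLex ((f.support.image toLex).max'
    (Finset.image_nonempty.2 (Finsupp.support_nonempty_iff.2 (by simpa using h))))

lemma topExp_mem {f : MvPolynomial σ k} (hf : f ≠ 0) : topExp f ∈ f.support := by
  rw [topExp, dif_neg hf]
  have := Finset.max'_mem (f.support.image toLex)
    (Finset.image_nonempty.2 (Finsupp.support_nonempty_iff.2 (by simpa using hf)))
  rcases Finset.mem_image.1 this with ⟨c, hc, hceq⟩
  rw [← hceq]
  simpa using hc

lemma le_topExp {f : MvPolynomial σ k} {b : σ →₀ ℕ} (hb : b ∈ f.support) :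
    toLex b ≤ toLex (topExp f) := by
  have hf : f ≠ 0 := fun h => by simp [h] at hb
  rw [topExp, dif_neg hf]
  simpa using Finset.le_max' (f.support.image toLex) (toLex b)
    (Finset.mem_image.2 ⟨b, hb, rfl⟩)

lemma coeff_topExp_add_topExp {f g : MvPolynomial σ k} (hf : f ≠ 0) (hg : g ≠ 0) :
    coeff (topExp f + topExp g) (f * g) = coeff (topExp f) f * coeff (topExp g) g := by
  classical
  rw [MvPolynomial.coeff_mul]
  apply Finset.sum_eq_single_of_mem (topExp f, topExp g)
  · rw [Finset.HasAntidiagonal.mem_antidiagonal]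
  · rintro ⟨u, v⟩ huv hne
    rw [Finset.HasAntidiagonal.mem_antidiagonal] at huv
    by_cases hu : coeff u f = 0
    · rw [hu, zero_mul]
    by_cases hv : coeff v g = 0
    · rw [hv, mul_zero]
    exfalso
    have hu' : toLex u ≤ toLex (topExp f) := le_topExp (MvPolynomial.mem_support_iff.2 hu)
    have hv' : toLex v ≤ toLex (topExp g) := le_topExp (MvPolynomial.mem_support_iff.2 hv)
    have hlt : toLex (u + v) < toLex (topExp f + topExp g) := by
      rcases lt_or_eq_of_le hu' with h | h
      · rw [toLex_add, toLex_add]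
        exact add_lt_add_of_lt_of_le h hv'
      · have huu : u = topExp f := toLex.injective h
        have : v ≠ topExp g := by
          intro hvv
          exact hne (by rw [huu, hvv])
        rw [toLex_add, toLex_add, huu]
        exact add_lt_add_right (lt_of_le_of_ne hv' (fun hc => this (toLex.injective hc))) _
    rw [huv] at hlt
    exact lt_irrefl _ hlt

lemma pow_topExp_mul_mem {G : Set (σ →₀ ℕ)} {g : MvPolynomial σ k} (hg : g ≠ 0)
    (h : MvPolynomial σ k) (hmem : g * h ∈ stairIdeal k G) :
    ∃ n, (mon k (topExp g)) ^ n * h ∈ stairIdeal k G := by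
  classical
  suffices H : ∀ N (h : MvPolynomial σ k), g * h ∈ stairIdeal k G → h.support.card ≤ N →
      ∃ n, (mon k (topExp g)) ^ n * h ∈ stairIdeal k G by
    exact H h.support.card h hmem le_rfl
  intro N
  induction N with
  | zero =>
    intro h _ hcard
    have : h = 0 := by
      rw [← MvPolynomial.support_eq_empty, ← Finset.card_eq_zero]
      omega
    exact ⟨0, by rw [this, mul_zero]; exact Ideal.zero_mem _⟩
  | succ N ih =>
    intro h hmem hcard
    by_cases hh : h = 0
    · exact ⟨0, by rw [hh, mul_zero]; exact Ideal.zero_mem _⟩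
    set B := topExp g with hB
    set A := topExp h with hA
    have hBA : B + A ∈ stair G := by
      apply (mem_stairIdeal.1 hmem)
      rw [MvPolynomial.mem_support_iff, coeff_topExp_add_topExp hg hh]
      exact mul_ne_zero (MvPolynomial.mem_support_iff.1 (topExp_mem hg))
        (MvPolynomial.mem_support_iff.1 (topExp_mem hh))
    set h' : MvPolynomial σ k := mon k B * h - monomial (B + A) (coeff A h) with hh'
    have hmonBA : (monomial (B + A) (coeff A h) : MvPolynomial σ k) ∈ stairIdeal k G := by
      intro b hb
      rw [MvPolynomial.support_monomial] at hb
      split at hb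
      · simp at hb
      · rw [Finset.mem_singleton] at hb; subst hb; exact hBA
    have hco : coeff (B + A) (mon k B * h) = coeff A h := by
      rw [mon, MvPolynomial.coeff_monomial_mul, one_mul]
    have hsupp : h'.support ⊆ ((mon k B * h).support).erase (B + A) := by
      intro b hb
      have hbne : b ≠ B + A := by
        intro hbe; subst hbe
        rw [MvPolynomial.mem_support_iff, hh', MvPolynomial.coeff_sub,
          MvPolynomial.coeff_monomial, if_pos rfl, hco, sub_self] at hb
        exact hb rfl
      rw [Finset.mem_erase]
      refine ⟨hbne, ?_⟩
      rw [MvPolynomial.mem_support_iff, hh', MvPolynomial.coeff_sub,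
        MvPolynomial.coeff_monomial, if_neg (fun he => hbne he.symm), sub_zero] at hb
      exact MvPolynomial.mem_support_iff.2 hb
    have hcard' : h'.support.card ≤ N := by
      have h0 : (mon k B * h).support = h.support.map (addRightEmbedding B) := by
        rw [mul_comm]; exact support_mul_mon
      have hBAmem : B + A ∈ (mon k B * h).support := by
        rw [MvPolynomial.mem_support_iff, hco]
        exact MvPolynomial.mem_support_iff.1 (topExp_mem hh)
      have := Finset.card_le_card hsupp
      rw [Finset.card_erase_of_mem hBAmem, h0, Finset.card_map] at this
      omega
    have hgh' : g * h' ∈ stairIdeal k G := by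
      have he : g * h' = mon k B * (g * h) - g * monomial (B + A) (coeff A h) := by
        rw [hh']; ring
      rw [he]
      exact Ideal.sub_mem _ (Ideal.mul_mem_left _ _ hmem) (Ideal.mul_mem_left _ _ hmonBA)
    obtain ⟨n, hn⟩ := ih h' hgh' hcard'
    refine ⟨n + 1, ?_⟩
    have he : (mon k B) ^ (n + 1) * h
        = (mon k B) ^ n * h' + (mon k B) ^ n * monomial (B + A) (coeff A h) := by
      rw [hh']; ring
    rw [he]
    exact Ideal.add_mem _ hn (Ideal.mul_mem_left _ _ hmonBA)

lemma mon_mem_of_mem {G : Set (σ →₀ ℕ)} {p : Ideal (MvPolynomial σ k)} (hp : p.IsPrime)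
    {f : MvPolynomial σ k} (hpc : p = (stairIdeal k G).colon (Ideal.span {f})) :
    ∀ g ∈ p, ∀ b ∈ g.support, mon k b ∈ p := by
  classical
  suffices H : ∀ N (g : MvPolynomial σ k), g ∈ p → g.support.card ≤ N →
      ∀ b ∈ g.support, mon k b ∈ p by
    intro g hg b hb; exact H g.support.card g hg le_rfl b hb
  intro N
  induction N with
  | zero =>
    intro g _ hcard b hb
    have : g.support = ∅ := Finset.card_eq_zero.1 (by omega)
    rw [this] at hb; simp at hb
  | succ N ih =>
    intro g hg hcard b hb
    have hgne : g ≠ 0 := fun h0 => by rw [h0] at hb; simp at hb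
    have hgf : g * f ∈ stairIdeal k G := by
      rw [hpc, Ideal.mem_colon_span_singleton] at hg; exact hg
    set B := topExp g with hB
    obtain ⟨n, hn⟩ := pow_topExp_mul_mem hgne f hgf
    have hBp : mon k B ∈ p := by
      apply hp.mem_of_pow_mem n
      rw [hpc, Ideal.mem_colon_span_singleton]
      exact hn
    by_cases hbB : b = B
    · rw [hbB]; exact hBp
    set g' : MvPolynomial σ k := g - monomial B (coeff B g) with hg'
    have hmonB : (monomial B (coeff B g) : MvPolynomial σ k) ∈ p := by
      have : (monomial B (coeff B g) : MvPolynomial σ k) = (C (coeff B g)) * mon k B := by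
        rw [mon, MvPolynomial.C_mul_monomial, mul_one]
      rw [this]
      exact Ideal.mul_mem_left _ _ hBp
    have hg'p : g' ∈ p := Ideal.sub_mem _ hg hmonB
    have hsupp : g'.support ⊆ g.support.erase B := by
      intro c hc
      have hcB : c ≠ B := by
        intro hce; subst hce
        rw [MvPolynomial.mem_support_iff, hg', MvPolynomial.coeff_sub,
          MvPolynomial.coeff_monomial, if_pos rfl, sub_self] at hc
        exact hc rfl
      rw [Finset.mem_erase]
      refine ⟨hcB, ?_⟩
      rw [MvPolynomial.mem_support_iff, hg', MvPolynomial.coeff_sub,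
        MvPolynomial.coeff_monomial, if_neg (fun he => hcB he.symm), sub_zero] at hc
      exact MvPolynomial.mem_support_iff.2 hc
    have hcard' : g'.support.card ≤ N := by
      have hBmem : B ∈ g.support := topExp_mem hgne
      have := Finset.card_le_card hsupp
      rw [Finset.card_erase_of_mem hBmem] at this
      omega
    apply ih g' hg'p hcard'
    rw [MvPolynomial.mem_support_iff, hg', MvPolynomial.coeff_sub,
      MvPolynomial.coeff_monomial, if_neg (fun he => hbB he.symm), sub_zero]
    exact MvPolynomial.mem_support_iff.1 hb

theorem assoc_iff_colon_mon [Finite σ] {G : Set (σ →₀ ℕ)} {p : Ideal (MvPolynomial σ k)}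
    (hp : p.IsPrime) :
    p ∈ associatedPrimes (MvPolynomial σ k) (MvPolynomial σ k ⧸ stairIdeal k G) ↔
      ∃ a, a ∉ stair G ∧ p = (stairIdeal k G).colon (Ideal.span {mon k a}) := by
  classical
  constructor
  · intro h
    obtain ⟨-, f, hf⟩ := mem_associatedPrimes_quotient_iff.1 h
    set f' : MvPolynomial σ k :=
      ∑ b ∈ f.support.filter (fun b => b ∉ stair G), monomial b (coeff b f) with hf'
    have hcoeff : ∀ b, coeff b f' =
        if b ∈ f.support.filter (fun b => b ∉ stair G) then coeff b f else 0 := by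
      intro b
      rw [hf', MvPolynomial.coeff_sum]
      simp_rw [MvPolynomial.coeff_monomial]
      rw [Finset.sum_ite_eq' (f.support.filter (fun b => b ∉ stair G)) b (fun c => coeff c f)]
    have hsub : f - f' ∈ stairIdeal k G := by
      intro b hb
      by_contra hbG
      rw [MvPolynomial.mem_support_iff, MvPolynomial.coeff_sub, hcoeff b] at hb
      by_cases hbf : b ∈ f.support
      · rw [if_pos (Finset.mem_filter.2 ⟨hbf, hbG⟩), sub_self] at hb; exact hb rfl
      · rw [if_neg (fun hc => hbf (Finset.mem_filter.1 hc).1), sub_zero] at hb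
        exact hb (MvPolynomial.notMem_support_iff.1 hbf)
    have hcol : p = (stairIdeal k G).colon (Ideal.span {f'}) := by
      ext g
      rw [hf, Ideal.mem_colon_span_singleton, Ideal.mem_colon_span_singleton]
      constructor
      · intro hgf
        have he : g * f' = g * f - g * (f - f') := by ring
        rw [he]
        exact Ideal.sub_mem _ hgf (Ideal.mul_mem_left _ _ hsub)
      · intro hgf'
        have he : g * f = g * f' + g * (f - f') := by ring
        rw [he]
        exact Ideal.add_mem _ hgf' (Ideal.mul_mem_left _ _ hsub)
    have hne : f' ≠ 0 := by
      intro h0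
      have hfI : f ∈ stairIdeal k G := by
        have h1 := hsub; rw [h0, sub_zero] at h1; exact h1
      have h2 : (1 : MvPolynomial σ k) ∈ p := by
        rw [hf, Ideal.mem_colon_span_singleton, one_mul]; exact hfI
      exact hp.ne_top ((Ideal.eq_top_iff_one _).2 h2)
    have hsuppf' : ∀ a ∈ f'.support, a ∉ stair G := by
      intro a ha
      have h1 := MvPolynomial.mem_support_iff.1 ha
      rw [hcoeff a] at h1
      by_cases hmem : a ∈ f.support.filter (fun b => b ∉ stair G)
      · exact (Finset.mem_filter.1 hmem).2
      · rw [if_neg hmem] at h1; exact absurd rfl h1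
    have hclaim1 : ∀ a ∈ f'.support, p ≤ (stairIdeal k G).colon (Ideal.span {mon k a}) := by
      intro a ha g hg
      rw [Ideal.mem_colon_span_singleton, mul_mon_mem_iff]
      intro c hc
      have hmc : mon k c ∈ p := mon_mem_of_mem hp hcol g hg c hc
      have h1 : mon k c * f' ∈ stairIdeal k G := by
        rw [hcol, Ideal.mem_colon_span_singleton] at hmc; exact hmc
      apply mem_stairIdeal.1 h1
      rw [MvPolynomial.mem_support_iff, mon, MvPolynomial.coeff_monomial_mul, one_mul]
      exact MvPolynomial.mem_support_iff.1 ha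
    have hclaim2 : ∃ a ∈ f'.support, (stairIdeal k G).colon (Ideal.span {mon k a}) ≤ p := by
      by_contra hcon
      push_neg at hcon
      have hw : ∀ a, ∃ g, a ∈ f'.support → (g * mon k a ∈ stairIdeal k G ∧ g ∉ p) := by
        intro a
        by_cases ha : a ∈ f'.support
        · obtain ⟨g, hg1, hg2⟩ := SetLike.not_le_iff_exists.1 (hcon a ha)
          exact ⟨g, fun _ => ⟨Ideal.mem_colon_span_singleton.1 hg1, hg2⟩⟩
        · exact ⟨0, fun h => absurd h ha⟩
      choose w hwspec using hw
      set P : MvPolynomial σ k := ∏ a ∈ f'.support, w a with hP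
      have hPf' : P * f' ∈ stairIdeal k G := by
        have hsum : P * f' = ∑ b ∈ f'.support, P * monomial b (coeff b f') := by
          conv_lhs => rw [MvPolynomial.as_sum f']
          rw [Finset.mul_sum]
        rw [hsum]
        refine Ideal.sum_mem _ fun b hb => ?_
        have hb' : w b * mon k b ∈ stairIdeal k G := (hwspec b hb).1
        have heq : P * monomial b (coeff b f')
            = ((∏ a ∈ f'.support.erase b, w a) * C (coeff b f')) * (w b * mon k b) := by
          have hCm : (C (coeff b f') : MvPolynomial σ k) * monomial b 1
              = monomial b (coeff b f') := by
            rw [MvPolynomial.C_mul_monomial, mul_one]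
          rw [hP, ← Finset.mul_prod_erase f'.support w hb, mon, ← hCm]
          ring
        rw [heq]
        exact Ideal.mul_mem_left _ _ hb'
      have hPp : P ∈ p := by
        rw [hcol, Ideal.mem_colon_span_singleton]; exact hPf'
      have hPm : (f'.support.val.map w).prod ∈ p := by
        rw [← Finset.prod_eq_multiset_prod]; exact hPp
      obtain ⟨x, hx, hxp⟩ := (hp.multiset_prod_mem_iff_exists_mem _).1 hPm
      obtain ⟨a, ha, rfl⟩ := Multiset.mem_map.1 hx
      exact (hwspec a ha).2 hxp
    obtain ⟨a, haf, hle⟩ := hclaim2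
    exact ⟨a, hsuppf' a haf, le_antisymm (hclaim1 a haf) hle⟩
  · rintro ⟨a, _, hpc⟩
    exact mem_associatedPrimes_quotient_iff.2 ⟨hp, mon k a, hpc⟩

end LexArg


section Split

variable {k : Type*} [Field k] {σ₁ σ₂ : Type*}

/-- extend an exponent vector on `σ₁` by zero -/
def e1 : (σ₁ →₀ ℕ) → ((σ₁ ⊕ σ₂) →₀ ℕ) := Finsupp.mapDomain Sum.inl

def e2 : (σ₂ →₀ ℕ) → ((σ₁ ⊕ σ₂) →₀ ℕ) := Finsupp.mapDomain Sum.inr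

/-- restrict an exponent vector to `σ₁` -/
def r1 (c : (σ₁ ⊕ σ₂) →₀ ℕ) : σ₁ →₀ ℕ :=
  Finsupp.comapDomain Sum.inl c Sum.inl_injective.injOn

def r2 (c : (σ₁ ⊕ σ₂) →₀ ℕ) : σ₂ →₀ ℕ :=
  Finsupp.comapDomain Sum.inr c Sum.inr_injective.injOn

@[simp] lemma r1_apply (c : (σ₁ ⊕ σ₂) →₀ ℕ) (i : σ₁) : r1 c i = c (Sum.inl i) := rfl
@[simp] lemma r2_apply (c : (σ₁ ⊕ σ₂) →₀ ℕ) (j : σ₂) : r2 c j = c (Sum.inr j) := rfl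

@[simp] lemma e1_apply_inl (a : σ₁ →₀ ℕ) (i : σ₁) : e1 (σ₂ := σ₂) a (Sum.inl i) = a i :=
  Finsupp.mapDomain_apply Sum.inl_injective a i

@[simp] lemma e1_apply_inr (a : σ₁ →₀ ℕ) (j : σ₂) : e1 (σ₂ := σ₂) a (Sum.inr j) = 0 :=
  Finsupp.mapDomain_notin_range a _ (by simp)

@[simp] lemma e2_apply_inr (a : σ₂ →₀ ℕ) (j : σ₂) : e2 (σ₁ := σ₁) a (Sum.inr j) = a j :=
  Finsupp.mapDomain_apply Sum.inr_injective a j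

@[simp] lemma e2_apply_inl (a : σ₂ →₀ ℕ) (i : σ₁) : e2 (σ₁ := σ₁) a (Sum.inl i) = 0 :=
  Finsupp.mapDomain_notin_range a _ (by simp)

@[simp] lemma r1_add (c d : (σ₁ ⊕ σ₂) →₀ ℕ) : r1 (c + d) = r1 c + r1 d := by
  ext i; simp

@[simp] lemma r2_add (c d : (σ₁ ⊕ σ₂) →₀ ℕ) : r2 (c + d) = r2 c + r2 d := by
  ext j; simp

@[simp] lemma r1_e1 (a : σ₁ →₀ ℕ) : r1 (e1 (σ₂ := σ₂) a) = a := by ext i; simp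

@[simp] lemma r1_e2 (a : σ₂ →₀ ℕ) : r1 (e2 (σ₁ := σ₁) a) = 0 := by ext i; simp

@[simp] lemma r2_e2 (a : σ₂ →₀ ℕ) : r2 (e2 (σ₁ := σ₁) a) = a := by ext j; simp

@[simp] lemma r2_e1 (a : σ₁ →₀ ℕ) : r2 (e1 (σ₂ := σ₂) a) = 0 := by ext j; simp

lemma e1_r1_add_e2_r2 (c : (σ₁ ⊕ σ₂) →₀ ℕ) : e1 (r1 c) + e2 (r2 c) = c := by
  ext x; cases x <;> simp

lemma e1_le_iff {a : σ₁ →₀ ℕ} {c : (σ₁ ⊕ σ₂) →₀ ℕ} : e1 a ≤ c ↔ a ≤ r1 c := by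
  rw [Finsupp.le_def, Finsupp.le_def]
  constructor
  · intro h i
    simpa using h (Sum.inl i)
  · intro h x
    cases x with
    | inl i => simpa using h i
    | inr j => simp

lemma e2_le_iff {a : σ₂ →₀ ℕ} {c : (σ₁ ⊕ σ₂) →₀ ℕ} : e2 a ≤ c ↔ a ≤ r2 c := by
  rw [Finsupp.le_def, Finsupp.le_def]
  constructor
  · intro h j
    simpa using h (Sum.inr j)
  · intro h x
    cases x with
    | inl i => simp
    | inr j => simpa using h j

lemma stair_split (G₁ : Set (σ₁ →₀ ℕ)) (G₂ : Set (σ₂ →₀ ℕ)) :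
    stair (e1 '' G₁ ∪ e2 '' G₂) = {c | r1 c ∈ stair G₁ ∨ r2 c ∈ stair G₂} := by
  ext c
  constructor
  · rintro ⟨g, (⟨g₁, hg₁, rfl⟩ | ⟨g₂, hg₂, rfl⟩), hgc⟩
    · exact Or.inl ⟨g₁, hg₁, e1_le_iff.1 hgc⟩
    · exact Or.inr ⟨g₂, hg₂, e2_le_iff.1 hgc⟩
  · rintro (⟨g₁, hg₁, hgc⟩ | ⟨g₂, hg₂, hgc⟩)
    · exact ⟨e1 g₁, Or.inl ⟨g₁, hg₁, rfl⟩, e1_le_iff.2 (by simpa using hgc)⟩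
    · exact ⟨e2 g₂, Or.inr ⟨g₂, hg₂, rfl⟩, e2_le_iff.2 (by simpa using hgc)⟩

lemma map_sup_stairIdeal (G₁ : Set (σ₁ →₀ ℕ)) (G₂ : Set (σ₂ →₀ ℕ)) :
    (stairIdeal k G₁).map (rename (Sum.inl : σ₁ → σ₁ ⊕ σ₂)).toRingHom
      ⊔ (stairIdeal k G₂).map (rename (Sum.inr : σ₂ → σ₁ ⊕ σ₂)).toRingHom
      = stairIdeal k (e1 '' G₁ ∪ e2 '' G₂) := by
  rw [← span_mon_eq, ← span_mon_eq, ← span_mon_eq, Ideal.map_span, Ideal.map_span,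
    ← Ideal.span_union]
  congr 1
  rw [Set.image_union, ← Set.image_comp, ← Set.image_comp, ← Set.image_comp, ← Set.image_comp]
  congr 1 <;> ext g <;> constructor <;> rintro ⟨a, ha, rfl⟩ <;>
    exact ⟨a, ha, by simp [Function.comp, mon, e1, e2, MvPolynomial.rename_monomial]⟩

lemma comap_inl_stairIdeal {G₁ : Set (σ₁ →₀ ℕ)} {G₂ : Set (σ₂ →₀ ℕ)}
    (h2 : (0 : σ₂ →₀ ℕ) ∉ stair G₂) :
    Ideal.comap (rename (Sum.inl : σ₁ → σ₁ ⊕ σ₂)).toRingHom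
        (stairIdeal k (e1 '' G₁ ∪ e2 '' G₂)) = stairIdeal k G₁ := by
  classical
  ext g
  rw [Ideal.mem_comap]
  change (rename Sum.inl g) ∈ stairIdeal k _ ↔ _
  rw [mem_stairIdeal, mem_stairIdeal, stair_split]
  rw [MvPolynomial.support_rename_of_injective Sum.inl_injective]
  constructor
  · intro h b hb
    have := h (Finsupp.mapDomain Sum.inl b) (Finset.mem_image.2 ⟨b, hb, rfl⟩)
    rcases this with h' | h'
    · rwa [show Finsupp.mapDomain (Sum.inl : σ₁ → σ₁ ⊕ σ₂) b = e1 b from rfl, r1_e1] at h'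
    · rw [show Finsupp.mapDomain (Sum.inl : σ₁ → σ₁ ⊕ σ₂) b = e1 b from rfl, r2_e1] at h'
      exact absurd h' h2
  · intro h c hc
    rcases Finset.mem_image.1 hc with ⟨b, hb, rfl⟩
    have : r1 (e1 (σ₂ := σ₂) b) ∈ stair G₁ ∨ r2 (e1 (σ₂ := σ₂) b) ∈ stair G₂ := by
      rw [r1_e1]
      exact Or.inl (h b hb)
    exact this

lemma comap_inr_stairIdeal {G₁ : Set (σ₁ →₀ ℕ)} {G₂ : Set (σ₂ →₀ ℕ)}
    (h1 : (0 : σ₁ →₀ ℕ) ∉ stair G₁) :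
    Ideal.comap (rename (Sum.inr : σ₂ → σ₁ ⊕ σ₂)).toRingHom
        (stairIdeal k (e1 '' G₁ ∪ e2 '' G₂)) = stairIdeal k G₂ := by
  classical
  ext g
  rw [Ideal.mem_comap]
  change (rename Sum.inr g) ∈ stairIdeal k _ ↔ _
  rw [mem_stairIdeal, mem_stairIdeal, stair_split]
  rw [MvPolynomial.support_rename_of_injective Sum.inr_injective]
  constructor
  · intro h b hb
    have := h (Finsupp.mapDomain Sum.inr b) (Finset.mem_image.2 ⟨b, hb, rfl⟩)
    rcases this with h' | h'
    · rw [show Finsupp.mapDomain (Sum.inr : σ₂ → σ₁ ⊕ σ₂) b = e2 b from rfl, r1_e2] at h'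
      exact absurd h' h1
    · rwa [show Finsupp.mapDomain (Sum.inr : σ₂ → σ₁ ⊕ σ₂) b = e2 b from rfl, r2_e2] at h'
  · intro h c hc
    rcases Finset.mem_image.1 hc with ⟨b, hb, rfl⟩
    have : r1 (e2 (σ₁ := σ₁) b) ∈ stair G₁ ∨ r2 (e2 (σ₁ := σ₁) b) ∈ stair G₂ := by
      rw [r2_e2]
      exact Or.inr (h b hb)
    exact this


lemma stair_comp (G₁ : Set (σ₁ →₀ ℕ)) (G₂ : Set (σ₂ →₀ ℕ)) (a₁ : σ₁ →₀ ℕ) (a₂ : σ₂ →₀ ℕ) :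
    stair (e1 '' {c | c + a₁ ∈ stair G₁} ∪ e2 '' {c | c + a₂ ∈ stair G₂})
      = stair {c | c + (e1 a₁ + e2 a₂) ∈ stair (e1 '' G₁ ∪ e2 '' G₂)} := by
  rw [stair_split, stair_setOf_add, stair_setOf_add, stair_setOf_add]
  ext c
  simp only [Set.mem_setOf_eq, stair_split, r1_add, r2_add, r1_e1, r1_e2, r2_e1, r2_e2,
    add_zero, zero_add]

end Split



theorem statement7 {k : Type*} [Field k] {t s : ℕ}
    (J : Ideal (MvPolynomial (Fin t) k)) (K : Ideal (MvPolynomial (Fin s) k))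
    (hJ : ∃ G : Set (Fin t →₀ ℕ), J = Ideal.span (mon k '' G))
    (hK : ∃ G : Set (Fin s →₀ ℕ), K = Ideal.span (mon k '' G))
    (p : Ideal (MvPolynomial (Fin t ⊕ Fin s) k)) (hp : p.IsPrime) :
    p ∈ associatedPrimes (MvPolynomial (Fin t ⊕ Fin s) k)
        (MvPolynomial (Fin t ⊕ Fin s) k ⧸ (J.map (MvPolynomial.rename (Sum.inl : Fin t → Fin t ⊕ Fin s)).toRingHom ⊔
                 K.map (MvPolynomial.rename (Sum.inr : Fin s → Fin t ⊕ Fin s)).toRingHom)) ↔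
      ∃ p₁ ∈ associatedPrimes (MvPolynomial (Fin t) k) (MvPolynomial (Fin t) k ⧸ J),
        ∃ p₂ ∈ associatedPrimes (MvPolynomial (Fin s) k) (MvPolynomial (Fin s) k ⧸ K),
          p = p₁.map (MvPolynomial.rename (Sum.inl : Fin t → Fin t ⊕ Fin s)).toRingHom ⊔
              p₂.map (MvPolynomial.rename (Sum.inr : Fin s → Fin t ⊕ Fin s)).toRingHom := by
  obtain ⟨G₁, hJe⟩ := hJ
  obtain ⟨G₂, hKe⟩ := hK
  have hJ1 : J = stairIdeal k G₁ := by rw [hJe, span_mon_eq]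
  have hK1 : K = stairIdeal k G₂ := by rw [hKe, span_mon_eq]
  subst hJ1 hK1
  letI : LinearOrder (Fin t ⊕ Fin s) := LinearOrder.lift' _ finSumFinEquiv.injective
  rw [map_sup_stairIdeal G₁ G₂]
  constructor
  · intro hass
    obtain ⟨a, ha, hpc⟩ := (assoc_iff_colon_mon hp).1 hass
    rw [stair_split] at ha
    simp only [Set.mem_setOf_eq] at ha
    push_neg at ha
    obtain ⟨ha₁, ha₂⟩ := ha
    set T₁ : Set (Fin t →₀ ℕ) := {c | c + r1 a ∈ stair G₁} with hT₁
    set T₂ : Set (Fin s →₀ ℕ) := {c | c + r2 a ∈ stair G₂} with hT₂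
    have hpT : p = stairIdeal k (e1 '' T₁ ∪ e2 '' T₂) := by
      rw [hpc, colon_stairIdeal]
      apply stairIdeal_congr
      rw [hT₁, hT₂, stair_comp, e1_r1_add_e2_r2]
    have h0T₂ : (0 : Fin s →₀ ℕ) ∉ stair T₂ := by
      rw [hT₂, stair_setOf_add]
      simpa using ha₂
    have h0T₁ : (0 : Fin t →₀ ℕ) ∉ stair T₁ := by
      rw [hT₁, stair_setOf_add]
      simpa using ha₁
    have hcomap1 : Ideal.comap (rename (Sum.inl : Fin t → Fin t ⊕ Fin s)).toRingHom p
        = stairIdeal k T₁ := by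
      rw [hpT]; exact comap_inl_stairIdeal h0T₂
    have hcomap2 : Ideal.comap (rename (Sum.inr : Fin s → Fin t ⊕ Fin s)).toRingHom p
        = stairIdeal k T₂ := by
      rw [hpT]; exact comap_inr_stairIdeal h0T₁
    haveI := hp
    have hprime1 : (stairIdeal k T₁).IsPrime := by
      rw [← hcomap1]; exact Ideal.comap_isPrime _ p
    have hprime2 : (stairIdeal k T₂).IsPrime := by
      rw [← hcomap2]; exact Ideal.comap_isPrime _ p
    have hcol1 : stairIdeal k T₁ = (stairIdeal k G₁).colon (Ideal.span {mon k (r1 a)}) := by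
      rw [colon_stairIdeal]
    have hcol2 : stairIdeal k T₂ = (stairIdeal k G₂).colon (Ideal.span {mon k (r2 a)}) := by
      rw [colon_stairIdeal]
    refine ⟨stairIdeal k T₁, ?_, stairIdeal k T₂, ?_, ?_⟩
    · exact mem_associatedPrimes_quotient_iff.2 ⟨hprime1, mon k (r1 a), hcol1⟩
    · exact mem_associatedPrimes_quotient_iff.2 ⟨hprime2, mon k (r2 a), hcol2⟩
    · rw [hpT, hT₁, hT₂, ← map_sup_stairIdeal]
  · rintro ⟨p₁, h1, p₂, h2, rfl⟩
    have hp1 : p₁.IsPrime := h1.1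
    have hp2 : p₂.IsPrime := h2.1
    obtain ⟨a₁, ha₁, hc₁⟩ := (assoc_iff_colon_mon hp1).1 h1
    obtain ⟨a₂, ha₂, hc₂⟩ := (assoc_iff_colon_mon hp2).1 h2
    apply (assoc_iff_colon_mon hp).2
    refine ⟨e1 a₁ + e2 a₂, ?_, ?_⟩
    · rw [stair_split]
      simp only [Set.mem_setOf_eq, r1_add, r2_add, r1_e1, r1_e2, r2_e1, r2_e2, add_zero, zero_add]
      push_neg
      exact ⟨ha₁, ha₂⟩
    · rw [hc₁, hc₂, colon_stairIdeal, colon_stairIdeal, colon_stairIdeal, map_sup_stairIdeal]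
      exact stairIdeal_congr (stair_comp G₁ G₂ a₁ a₂)


end LexPaper
end
end
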